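/- Let f:D→ℝ be strongly tree-submodular and x∈D, and suppose that for each i∈V the vertex x_i has exactly two children c_i^{−1} and c_i^{+1} in T_i. For u ∈ {−1,0,+1}^n define y^u ∈ D by y^u_i = x_i if u_i = 0 and y^u_i = c_i^{u_i} otherwise. Then h(u) = f(y^u) is bisubmodular: h(u)+h(v) ≥ h(u⊓v)+h(u⊔v) for all u,v ∈ {−1,0,+1}^n, where componentwise u⊔v = sign(u+v) and u⊓v = |uv|·sign(u+v). (The restriction of f to OUTWARD(x) is a bisubmodular function when the trees are binary.) -/

import Mathlib

/-- A finite rooted tree on vertex set `V`, encoded by its root, the parent function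
(with `parent root = root`) and the depth function (distance to the root). -/
structure RTree (V : Type*) where
  root : V
  parent : V → V
  depth : V → ℕ
  parent_root : parent root = root
  depth_root : depth root = 0
  depth_parent : ∀ v, v ≠ root → depth (parent v) + 1 = depth v

namespace RTree

variable {V : Type*} (T : RTree V)

/-- `a ⪯ b` : `a` is an ancestor of `b`, i.e. `a` lies on the path from `b` to the root. -/
def anc (a b : V) : Prop := ∃ k : ℕ, T.parent^[k] b = a

theorem iterate_depth_aux : ∀ (n : ℕ) (v : V), T.depth v = n → T.parent^[n] v = T.root := by
  intro n
  induction n with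
  | zero =>
    intro v hn
    by_cases hv : v = T.root
    · simp [hv]
    · have := T.depth_parent v hv; omega
  | succ n ih =>
    intro v hn
    have hv : v ≠ T.root := by
      intro h; rw [h, T.depth_root] at hn; omega
    have h := T.depth_parent v hv
    rw [Function.iterate_succ_apply]
    exact ih (T.parent v) (by omega)

theorem iterate_depth (v : V) : T.parent^[T.depth v] v = T.root :=
  T.iterate_depth_aux (T.depth v) v rfl

theorem anc_root (b : V) : T.anc T.root b := ⟨T.depth b, T.iterate_depth b⟩

theorem exists_lcaIndex (a b : V) : ∃ k : ℕ, T.anc (T.parent^[k] a) b :=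
  ⟨T.depth a, by rw [T.iterate_depth a]; exact T.anc_root b⟩

open Classical in
/-- The highest common ancestor of `a` and `b` : the deepest vertex that is an ancestor
of both `a` and `b` (i.e. the unique vertex of the path `P[a→b]` that is an ancestor of both). -/
noncomputable def lca (a b : V) : V := T.parent^[Nat.find (T.exists_lcaIndex a b)] a

/-- `ρ(a,b)` : the number of edges of the unique path `P[a→b]` from `a` to `b`. -/
noncomputable def dist (a b : V) : ℕ :=
  (T.depth a - T.depth (T.lca a b)) + (T.depth b - T.depth (T.lca a b))

open Classical in
/-- `P[a→b, d]` : the `d`-th vertex of the path from `a` to `b` (first the ascending part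
from `a` to the highest common ancestor, then the descending part towards `b`);
by convention it equals `b` for `d > ρ(a,b)`. -/
noncomputable def pathVertex (a b : V) (d : ℕ) : V :=
  if T.dist a b ≤ d then b
  else if d ≤ T.depth a - T.depth (T.lca a b) then T.parent^[d] a
  else T.parent^[T.dist a b - d] b

open Classical in
/-- `a ⊓ b` : the member of `{P[a→b,⌊ρ(a,b)/2⌋], P[a→b,⌈ρ(a,b)/2⌉]}` that is an
ancestor of the other one. -/
noncomputable def cap (a b : V) : V :=
  if T.anc (T.pathVertex a b (T.dist a b / 2)) (T.pathVertex a b ((T.dist a b + 1) / 2))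
  then T.pathVertex a b (T.dist a b / 2)
  else T.pathVertex a b ((T.dist a b + 1) / 2)

open Classical in
/-- `a ⊔ b` : the member of `{P[a→b,⌊ρ(a,b)/2⌋], P[a→b,⌈ρ(a,b)/2⌉]}` that is a
descendant of the other one. -/
noncomputable def cup (a b : V) : V :=
  if T.anc (T.pathVertex a b (T.dist a b / 2)) (T.pathVertex a b ((T.dist a b + 1) / 2))
  then T.pathVertex a b ((T.dist a b + 1) / 2)
  else T.pathVertex a b (T.dist a b / 2)

/-- `a ∧ b` : the highest common ancestor of `a` and `b`. -/
noncomputable def meet (a b : V) : V := T.lca a b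

/-- `a ∨ b` : the unique vertex of `P[a→b]` with `ρ(a, a∨b) = ρ(a∧b, b)`. -/
noncomputable def join (a b : V) : V :=
  T.pathVertex a b (T.depth b - T.depth (T.lca a b))

/-- `a ↑^d b = P[a→b,d] ∧ b`. -/
noncomputable def up (d : ℕ) (a b : V) : V := T.meet (T.pathVertex a b d) b

/-- `a ↓_d b = P[a→b, ρ(a ↑^d b, b)]`. -/
noncomputable def down (d : ℕ) (a b : V) : V :=
  T.pathVertex a b (T.dist (T.up d a b) b)

end RTree

section Product

variable {ι : Type*} {V : ι → Type*}

/-- `f` is strongly tree-submodular w.r.t. the trees `T i`: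
`f(x) + f(y) ≥ f(x ⊓ y) + f(x ⊔ y)`, the operations acting componentwise. -/
def StronglyTreeSubmodular (T : ∀ i, RTree (V i)) (f : (∀ i, V i) → ℝ) : Prop :=
  ∀ x y : ∀ i, V i,
    f (fun i => (T i).cap (x i) (y i)) + f (fun i => (T i).cup (x i) (y i)) ≤ f x + f y

/-- `INWARD(x) = { y ∈ NEIB(x) : y ⪯ x }`, where `NEIB(x) = {y : max_i ρ(x_i,y_i) ≤ 1}`. -/
def inward (T : ∀ i, RTree (V i)) (x : ∀ i, V i) : Set (∀ i, V i) :=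
  {y | (∀ i, (T i).dist (x i) (y i) ≤ 1) ∧ ∀ i, (T i).anc (y i) (x i)}

/-- `OUTWARD(x) = { y ∈ NEIB(x) : x ⪯ y }`. -/
def outward (T : ∀ i, RTree (V i)) (x : ∀ i, V i) : Set (∀ i, V i) :=
  {y | (∀ i, (T i).dist (x i) (y i) ≤ 1) ∧ ∀ i, (T i).anc (x i) (y i)}

end Product

/-- `a ⊔ b = sign(a+b)` on `{-1,0,+1}`, computed in `ℤ`. -/
noncomputable def scup (a b : SignType) : SignType := SignType.sign ((a : ℤ) + (b : ℤ))

/-- `a ⊓ b = |ab| · sign(a+b)` on `{-1,0,+1}`, computed in `ℤ`. -/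
noncomputable def scap (a b : SignType) : SignType :=
  SignType.sign (|(a : ℤ) * (b : ℤ)| * Int.sign ((a : ℤ) + (b : ℤ)))

/-- `f` is bisubmodular: `f(x) + f(y) ≥ f(x ⊓ y) + f(x ⊔ y)` where componentwise
`x ⊔ y = sign(x+y)` and `x ⊓ y = |xy| · sign(x+y)`. -/
def Bisubmodular {ι : Type*} (f : (ι → SignType) → ℝ) : Prop :=
  ∀ x y : ι → SignType,
    f (fun i => scap (x i) (y i)) + f (fun i => scup (x i) (y i)) ≤ f x + f y


namespace RTree

section Aux

open Classical

variable {W : Type*} (T : RTree W)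

lemma aux_depth_parent_le (v : W) : T.depth (T.parent v) ≤ T.depth v := by
  by_cases h : v = T.root
  · simp [h, T.parent_root]
  · have := T.depth_parent v h; omega

lemma aux_depth_iterate_le (k : ℕ) (v : W) : T.depth (T.parent^[k] v) ≤ T.depth v := by
  induction k with
  | zero => simp
  | succ n ih =>
    rw [Function.iterate_succ_apply']
    exact le_trans (T.aux_depth_parent_le _) ih

lemma aux_anc_depth_le {a b : W} (h : T.anc a b) : T.depth a ≤ T.depth b := by
  obtain ⟨k, hk⟩ := h
  rw [← hk]; exact T.aux_depth_iterate_le k b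

variable {x w w₁ w₂ : W}

lemma aux_child_depth (hw : T.parent w = x) (hne : w ≠ x) : T.depth w = T.depth x + 1 := by
  have hr : w ≠ T.root := by
    intro h; subst h; rw [T.parent_root] at hw; exact hne hw
  have := T.depth_parent w hr
  rw [hw] at this; omega

lemma aux_not_anc_child (hw : T.parent w = x) (hne : w ≠ x) : ¬ T.anc w x := by
  intro h
  have := T.aux_anc_depth_le h
  have := T.aux_child_depth hw hne
  omega

lemma aux_not_anc_children (hw₁ : T.parent w₁ = x) (hne₁ : w₁ ≠ x)
    (hw₂ : T.parent w₂ = x) (hne₂ : w₂ ≠ x) (h12 : w₁ ≠ w₂) : ¬ T.anc w₁ w₂ := by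
  rintro ⟨k, hk⟩
  cases k with
  | zero => exact h12 hk.symm
  | succ n =>
    rw [Function.iterate_succ_apply, hw₂] at hk
    have h1 := T.aux_depth_iterate_le n x
    have h2 := T.aux_child_depth hw₁ hne₁
    rw [hk] at h1
    omega

lemma aux_lca_self (a : W) : T.lca a a = a := by
  have h : Nat.find (T.exists_lcaIndex a a) = 0 :=
    (Nat.find_eq_zero _).mpr ⟨0, rfl⟩
  rw [RTree.lca, h]; rfl

lemma aux_dist_self (a : W) : T.dist a a = 0 := by
  rw [RTree.dist, T.aux_lca_self]; omega

lemma aux_cap_cup_self (a : W) : T.cap a a = a ∧ T.cup a a = a := by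
  have hd := T.aux_dist_self a
  have hp : T.pathVertex a a 0 = a := by
    rw [RTree.pathVertex, hd]; simp
  constructor
  · rw [RTree.cap, hd]
    norm_num [hp]
  · rw [RTree.cup, hd]
    norm_num [hp]

lemma aux_lca_xw (hw : T.parent w = x) : T.lca x w = x := by
  have h : Nat.find (T.exists_lcaIndex x w) = 0 :=
    (Nat.find_eq_zero _).mpr ⟨1, by simpa using hw⟩
  rw [RTree.lca, h]; rfl

lemma aux_dist_xw (hw : T.parent w = x) (hne : w ≠ x) : T.dist x w = 1 := by
  rw [RTree.dist, T.aux_lca_xw hw, T.aux_child_depth hw hne]; omega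

lemma aux_cap_cup_xw (hw : T.parent w = x) (hne : w ≠ x) :
    T.cap x w = x ∧ T.cup x w = w := by
  have hd := T.aux_dist_xw hw hne
  have hl := T.aux_lca_xw hw
  have hp0 : T.pathVertex x w 0 = x := by
    rw [RTree.pathVertex, hd, hl]; simp
  have hp1 : T.pathVertex x w 1 = w := by
    rw [RTree.pathVertex, hd]; simp
  have hanc : T.anc x w := ⟨1, by simpa using hw⟩
  constructor
  · rw [RTree.cap, hd]; norm_num [hp0, hp1, hanc]
  · rw [RTree.cup, hd]; norm_num [hp0, hp1, hanc]

lemma aux_lca_wx (hw : T.parent w = x) (hne : w ≠ x) : T.lca w x = x := by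
  have h : Nat.find (T.exists_lcaIndex w x) = 1 := by
    rw [Nat.find_eq_iff]
    constructor
    · exact ⟨0, by simpa using hw.symm⟩
    · intro m hm
      interval_cases m
      simpa using T.aux_not_anc_child hw hne
  rw [RTree.lca, h]
  simpa using hw

lemma aux_dist_wx (hw : T.parent w = x) (hne : w ≠ x) : T.dist w x = 1 := by
  rw [RTree.dist, T.aux_lca_wx hw hne, T.aux_child_depth hw hne]; omega

lemma aux_cap_cup_wx (hw : T.parent w = x) (hne : w ≠ x) :
    T.cap w x = x ∧ T.cup w x = w := by
  have hd := T.aux_dist_wx hw hne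
  have hl := T.aux_lca_wx hw hne
  have hdep := T.aux_child_depth hw hne
  have hp0 : T.pathVertex w x 0 = w := by
    rw [RTree.pathVertex, hd, hl]; simp [hdep]
  have hp1 : T.pathVertex w x 1 = x := by
    rw [RTree.pathVertex, hd]; simp
  have hanc : ¬ T.anc w x := T.aux_not_anc_child hw hne
  constructor
  · rw [RTree.cap, hd]; norm_num [hp0, hp1, hanc]
  · rw [RTree.cup, hd]; norm_num [hp0, hp1, hanc]

lemma aux_lca_ww (hw₁ : T.parent w₁ = x) (hne₁ : w₁ ≠ x)
    (hw₂ : T.parent w₂ = x) (hne₂ : w₂ ≠ x) (h12 : w₁ ≠ w₂) : T.lca w₁ w₂ = x := by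
  have h : Nat.find (T.exists_lcaIndex w₁ w₂) = 1 := by
    rw [Nat.find_eq_iff]
    constructor
    · exact ⟨1, by simp [hw₁, hw₂]⟩
    · intro m hm
      interval_cases m
      simpa using T.aux_not_anc_children hw₁ hne₁ hw₂ hne₂ h12
  rw [RTree.lca, h]
  simpa using hw₁

lemma aux_dist_ww (hw₁ : T.parent w₁ = x) (hne₁ : w₁ ≠ x)
    (hw₂ : T.parent w₂ = x) (hne₂ : w₂ ≠ x) (h12 : w₁ ≠ w₂) : T.dist w₁ w₂ = 2 := by
  rw [RTree.dist, T.aux_lca_ww hw₁ hne₁ hw₂ hne₂ h12,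
    T.aux_child_depth hw₁ hne₁, T.aux_child_depth hw₂ hne₂]; omega

lemma aux_cap_cup_ww (hw₁ : T.parent w₁ = x) (hne₁ : w₁ ≠ x)
    (hw₂ : T.parent w₂ = x) (hne₂ : w₂ ≠ x) (h12 : w₁ ≠ w₂) :
    T.cap w₁ w₂ = x ∧ T.cup w₁ w₂ = x := by
  have hd := T.aux_dist_ww hw₁ hne₁ hw₂ hne₂ h12
  have hl := T.aux_lca_ww hw₁ hne₁ hw₂ hne₂ h12
  have hdep := T.aux_child_depth hw₁ hne₁
  have hp1 : T.pathVertex w₁ w₂ 1 = x := by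
    rw [RTree.pathVertex, hd, hl]
    simp [hdep, hw₁]
  have hanc : T.anc x x := ⟨0, rfl⟩
  constructor
  · rw [RTree.cap, hd]; norm_num [hp1, hanc]
  · rw [RTree.cup, hd]; norm_num [hp1, hanc]

lemma aux_cap_cup_signs (c : SignType → W) (hc0 : c 0 = x)
    (hch : ∀ s : SignType, s ≠ 0 → T.parent (c s) = x ∧ c s ≠ x)
    (hdist : c (-1) ≠ c 1) (a b : SignType) :
    T.cap (c a) (c b) = c (scap a b) ∧ T.cup (c a) (c b) = c (scup a b) := by
  have hm : T.parent (c SignType.neg) = x ∧ c SignType.neg ≠ x := hch SignType.neg (by decide)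
  have hp : T.parent (c SignType.pos) = x ∧ c SignType.pos ≠ x := hch SignType.pos (by decide)
  have hc0' : c SignType.zero = x := hc0
  have hdist' : c SignType.neg ≠ c SignType.pos := hdist
  cases a <;> cases b
  · -- zero zero
    rw [show scap SignType.zero SignType.zero = SignType.zero from by decide,
        show scup SignType.zero SignType.zero = SignType.zero from by decide]
    exact T.aux_cap_cup_self (c SignType.zero)
  · -- zero neg
    rw [show scap SignType.zero SignType.neg = SignType.zero from by decide,
        show scup SignType.zero SignType.neg = SignType.neg from by decide, hc0']
    exact T.aux_cap_cup_xw hm.1 hm.2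
  · -- zero pos
    rw [show scap SignType.zero SignType.pos = SignType.zero from by decide,
        show scup SignType.zero SignType.pos = SignType.pos from by decide, hc0']
    exact T.aux_cap_cup_xw hp.1 hp.2
  · -- neg zero
    rw [show scap SignType.neg SignType.zero = SignType.zero from by decide,
        show scup SignType.neg SignType.zero = SignType.neg from by decide, hc0']
    exact T.aux_cap_cup_wx hm.1 hm.2
  · -- neg neg
    rw [show scap SignType.neg SignType.neg = SignType.neg from by decide,
        show scup SignType.neg SignType.neg = SignType.neg from by decide]
    exact T.aux_cap_cup_self (c SignType.neg)
  · -- neg pos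
    rw [show scap SignType.neg SignType.pos = SignType.zero from by decide,
        show scup SignType.neg SignType.pos = SignType.zero from by decide, hc0']
    exact T.aux_cap_cup_ww hm.1 hm.2 hp.1 hp.2 hdist'
  · -- pos zero
    rw [show scap SignType.pos SignType.zero = SignType.zero from by decide,
        show scup SignType.pos SignType.zero = SignType.pos from by decide, hc0']
    exact T.aux_cap_cup_wx hp.1 hp.2
  · -- pos neg
    rw [show scap SignType.pos SignType.neg = SignType.zero from by decide,
        show scup SignType.pos SignType.neg = SignType.zero from by decide, hc0']
    exact T.aux_cap_cup_ww hp.1 hp.2 hm.1 hm.2 (Ne.symm hdist')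
  · -- pos pos
    rw [show scap SignType.pos SignType.pos = SignType.pos from by decide,
        show scup SignType.pos SignType.pos = SignType.pos from by decide]
    exact T.aux_cap_cup_self (c SignType.pos)

end Aux

end RTree

/-- The restriction of a strongly tree-submodular function to
`OUTWARD(x)` is bisubmodular when the trees are binary: if each `x_i` has exactly two
children `c_i(-1)` and `c_i(+1)` (and `c_i(0) = x_i`), then
`h(u) = f(i ↦ c_i(u_i))` satisfies `h(u) + h(v) ≥ h(u ⊓ v) + h(u ⊔ v)` for all
`u, v ∈ {-1,0,+1}ⁿ`, where `u ⊔ v = sign(u+v)` and `u ⊓ v = |uv|·sign(u+v)`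
componentwise. -/
theorem outward_restriction_bisubmodular {ι : Type*} [Fintype ι] {V : ι → Type*}
    [∀ i, Fintype (V i)] (T : ∀ i, RTree (V i)) (f : (∀ i, V i) → ℝ)
    (hf : StronglyTreeSubmodular T f) (x : ∀ i, V i) (c : ∀ i, SignType → V i)
    (hc0 : ∀ i, c i 0 = x i)
    (hchild : ∀ i (s : SignType), s ≠ 0 → (T i).parent (c i s) = x i ∧ c i s ≠ x i)
    (hdistinct : ∀ i, c i (-1) ≠ c i 1)
    (honly : ∀ i (v : V i), (T i).parent v = x i → v ≠ x i → v = c i (-1) ∨ v = c i 1) :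
    ∀ u v : ι → SignType,
      f (fun i => c i (scap (u i) (v i))) + f (fun i => c i (scup (u i) (v i))) ≤
        f (fun i => c i (u i)) + f (fun i => c i (v i)) := by
  intro u v
  have key : ∀ i, (T i).cap (c i (u i)) (c i (v i)) = c i (scap (u i) (v i)) ∧
      (T i).cup (c i (u i)) (c i (v i)) = c i (scup (u i) (v i)) := fun i =>
    (T i).aux_cap_cup_signs (c i) (hc0 i) (hchild i) (hdistinct i) (u i) (v i)
  have h := hf (fun i => c i (u i)) (fun i => c i (v i))
  have e1 : (fun i => (T i).cap (c i (u i)) (c i (v i))) =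
      fun i => c i (scap (u i) (v i)) := funext fun i => (key i).1
  have e2 : (fun i => (T i).cup (c i (u i)) (c i (v i))) =
      fun i => c i (scup (u i) (v i)) := funext fun i => (key i).2
  rw [e1, e2] at h
  exact h
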